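/- Fix n ≥ 2 and β ∈ (0,1). Set τ = 0, a = β, b = 1. Then the ellipsoid E = {(y_1, ȳ) ∈ ℝ × ℝ^{n−1} : y_1²/β² + ‖ȳ‖² ≤ 1} is contained in the slab B_{−β,β} = {x ∈ ℝ^n : ‖x‖ ≤ 1, −β ≤ x_1 ≤ β}, and E is the maximum volume ellipsoid inscribed in B_{−β,β}. -/

import Mathlib

open scoped RealInnerProductSpace
open Matrix

/-- For `0 < β < 1`, the ellipsoid `E = {y : y₁²/β² + ‖ȳ‖² ≤ 1}` is contained in the
symmetric slab `B_{-β,β} = {x : ‖x‖ ≤ 1, -β ≤ x₁ ≤ β}`, and it is the maximum volume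
inscribed ellipsoid: any ellipsoid `c + A(B_n)` (with `A` symmetric positive definite)
contained in the slab has `det A ≤ β` (the determinant of `diag(β,1,…,1)`). -/
theorem symmetric_slab_john_ellipsoid
    (n : ℕ) (hn : 2 ≤ n) (β : ℝ) (hβ0 : 0 < β) (hβ1 : β < 1) :
    {y : EuclideanSpace ℝ (Fin n) |
        (y ⟨0, by omega⟩) ^ 2 / β ^ 2 + (‖y‖ ^ 2 - (y ⟨0, by omega⟩) ^ 2) ≤ 1}
      ⊆ {x : EuclideanSpace ℝ (Fin n) | ‖x‖ ≤ 1 ∧ -β ≤ x ⟨0, by omega⟩ ∧ x ⟨0, by omega⟩ ≤ β}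
    ∧
    ∀ (A : Matrix (Fin n) (Fin n) ℝ) (c : EuclideanSpace ℝ (Fin n)),
      A.IsSymm → A.PosDef →
      {x : EuclideanSpace ℝ (Fin n) |
          ∃ u : EuclideanSpace ℝ (Fin n), ‖u‖ ≤ 1 ∧ x = c + Matrix.toEuclideanLin A u}
        ⊆ {x : EuclideanSpace ℝ (Fin n) | ‖x‖ ≤ 1 ∧ -β ≤ x ⟨0, by omega⟩ ∧ x ⟨0, by omega⟩ ≤ β} →
      A.det ≤ β := by
  have hn0 : 0 < n := by omega
  set i0 : Fin n := ⟨0, by omega⟩ with hi0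
  have hβ2 : (0:ℝ) < β ^ 2 := by positivity
  constructor
  · intro y hy
    simp only [Set.mem_setOf_eq] at hy ⊢
    have hsq : (y i0) ^ 2 ≤ ‖y‖ ^ 2 := by
      rw [EuclideanSpace.norm_eq, Real.sq_sqrt (by positivity)]
      have := Finset.single_le_sum (f := fun i => ‖y i‖ ^ 2)
        (fun i _ => by positivity) (Finset.mem_univ i0)
      simpa [Real.norm_eq_abs, sq_abs] using this
    have h1 : (y i0) ^ 2 / β ^ 2 ≤ 1 := by linarith
    have h2 : (y i0) ^ 2 ≤ β ^ 2 := by rwa [div_le_one hβ2] at h1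
    have h3 : (y i0) ^ 2 ≤ (y i0) ^ 2 / β ^ 2 := by
      rw [le_div_iff₀ hβ2]
      have hb1 : β ^ 2 ≤ 1 := by nlinarith
      exact mul_le_of_le_one_right (sq_nonneg (y i0)) hb1
    refine ⟨?_, ?_, ?_⟩
    · nlinarith [norm_nonneg y]
    · nlinarith
    · nlinarith
  · intro A c hsymm hpd hsub
    have hH : A.IsHermitian := hpd.1
    set B := hH.eigenvectorBasis with hB
    set lam := hH.eigenvalues with hlam
    have hmem : ∀ u : EuclideanSpace ℝ (Fin n), ‖u‖ ≤ 1 →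
        ‖c + Matrix.toEuclideanLin A u‖ ≤ 1 ∧
          -β ≤ (c + Matrix.toEuclideanLin A u) i0 ∧
          (c + Matrix.toEuclideanLin A u) i0 ≤ β := by
      intro u hu
      exact hsub ⟨u, hu, rfl⟩
    have hAu : ∀ u : EuclideanSpace ℝ (Fin n), ‖u‖ ≤ 1 →
        ‖Matrix.toEuclideanLin A u‖ ≤ 1 := by
      intro u hu
      have h1 := (hmem u hu).1
      have h2 := (hmem (-u) (by simpa using hu)).1
      have hneg : c + Matrix.toEuclideanLin A (-u) = c - Matrix.toEuclideanLin A u := by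
        rw [map_neg]; abel
      rw [hneg] at h2
      have key : (2:ℝ) • Matrix.toEuclideanLin A u =
          (c + Matrix.toEuclideanLin A u) - (c - Matrix.toEuclideanLin A u) := by module
      have h3 : ‖(2:ℝ) • Matrix.toEuclideanLin A u‖ ≤ 2 := by
        rw [key]; exact (norm_sub_le _ _).trans (by linarith)
      rw [norm_smul] at h3
      have : ‖(2:ℝ)‖ = 2 := by norm_num
      rw [this] at h3
      linarith
    have hlam_pos : ∀ i, 0 < lam i := hpd.eigenvalues_pos
    have hAB : ∀ i, Matrix.toEuclideanLin A (B i) = lam i • B i := by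
      intro i
      ext j
      simpa [Matrix.toEuclideanLin_apply] using congrFun (hH.mulVec_eigenvectorBasis i) j
    have hBnorm : ∀ i, ‖B i‖ = 1 := fun i => B.orthonormal.1 i
    have hlam_le : ∀ i, lam i ≤ 1 := by
      intro i
      have h := hAu (B i) (hBnorm i).le
      rw [hAB i, norm_smul, hBnorm i, mul_one, Real.norm_eq_abs,
        abs_of_pos (hlam_pos i)] at h
      exact h
    set e1 : EuclideanSpace ℝ (Fin n) := EuclideanSpace.single i0 (1:ℝ) with he1def
    have he1 : ‖e1‖ = 1 := by simp [he1def]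
    have hval : (Matrix.toEuclideanLin A e1) i0 = A i0 i0 := by
      show (A *ᵥ fun j => e1 j) i0 = A i0 i0
      simp [Matrix.mulVec, dotProduct, he1def, EuclideanSpace.single_apply]
    have hq : A i0 i0 ≤ β := by
      have h1 := (hmem e1 he1.le).2.2
      have h2 := (hmem (-e1) (by simp [he1])).2.1
      have hn1 : (c + Matrix.toEuclideanLin A e1) i0 = c i0 + A i0 i0 := by
        rw [PiLp.add_apply, hval]
      have hn2 : (c + Matrix.toEuclideanLin A (-e1)) i0 = c i0 - A i0 i0 := by
        rw [map_neg, PiLp.add_apply, PiLp.neg_apply, hval]; ring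
      rw [hn1] at h1; rw [hn2] at h2
      linarith
    have hsymA : (Matrix.toEuclideanLin A).IsSymmetric :=
      Matrix.isHermitian_iff_isSymmetric.1 hH
    have hrepr : ∀ i, B.repr (Matrix.toEuclideanLin A e1) i = lam i * B.repr e1 i := by
      intro i
      rw [B.repr_apply_apply, B.repr_apply_apply, ← hsymA (B i) e1, hAB i,
        real_inner_smul_left]
    have hQ : ⟪e1, Matrix.toEuclideanLin A e1⟫ = ∑ i, lam i * (B.repr e1 i) ^ 2 := by
      rw [← B.repr.inner_map_map e1 (Matrix.toEuclideanLin A e1)]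
      rw [PiLp.inner_apply]
      refine Finset.sum_congr rfl fun i _ => ?_
      rw [hrepr i]
      simp [RCLike.inner_apply]
      ring
    have hQval : ⟪e1, Matrix.toEuclideanLin A e1⟫ = A i0 i0 := by
      rw [he1def, EuclideanSpace.inner_single_left]
      simpa using hval
    have hone : ∑ i, (B.repr e1 i) ^ 2 = 1 := by
      have h := B.repr.inner_map_map e1 e1
      rw [PiLp.inner_apply] at h
      have h2 : ⟪e1, e1⟫ = 1 := by
        rw [real_inner_self_eq_norm_sq, he1]; norm_num
      rw [h2] at h
      calc ∑ i, (B.repr e1 i) ^ 2 = ∑ i, (starRingEnd ℝ) (B.repr e1 i) * B.repr e1 i := by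
            refine Finset.sum_congr rfl fun i _ => ?_; simp; ring
        _ = 1 := h
    obtain ⟨j, hj⟩ : ∃ j, lam j ≤ β := by
      by_contra hcon
      push_neg at hcon
      have hex : ∃ i, B.repr e1 i ≠ 0 := by
        by_contra hc
        push_neg at hc
        simp [hc] at hone
      obtain ⟨i, hi⟩ := hex
      have hipos : 0 < (B.repr e1 i) ^ 2 := by positivity
      have hstrict : β * ∑ k, (B.repr e1 k) ^ 2 < ∑ k, lam k * (B.repr e1 k) ^ 2 := by
        rw [Finset.mul_sum]
        refine Finset.sum_lt_sum (fun k _ => ?_) ⟨i, Finset.mem_univ i, ?_⟩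
        · nlinarith [sq_nonneg (B.repr e1 k), hcon k]
        · nlinarith [hcon i]
      rw [hone, mul_one] at hstrict
      rw [← hQ, hQval] at hstrict
      linarith
    have hdet : A.det = ∏ i, lam i := by
      simpa using hH.det_eq_prod_eigenvalues
    have hprod : ∏ i ∈ Finset.univ.erase j, lam i ≤ 1 :=
      Finset.prod_le_one (fun i _ => (hlam_pos i).le) (fun i _ => hlam_le i)
    have hprod0 : 0 ≤ ∏ i ∈ Finset.univ.erase j, lam i :=
      Finset.prod_nonneg (fun i _ => (hlam_pos i).le)
    rw [hdet, ← Finset.prod_erase_mul _ _ (Finset.mem_univ j)]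
    nlinarith [hlam_pos j]
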